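/- An admissible ideal I on ω satisfies condition (C3) if and only if for every countable family {A_n : n ∈ ω} ⊆ I there exists A ∈ H(I) such that A ∩ A_n is finite for every n ∈ ω. -/
import Mathlib


open Set Filter

/-- `I` is an ideal on the countable set `X`: closed under subsets and finite
unions, contains all finite sets, and does not contain the whole set. -/
def IsIdeal {X : Type*} (I : Set (Set X)) : Prop :=
  (∀ A B : Set X, A ∈ I → B ⊆ A → B ∈ I) ∧
  (∀ A B : Set X, A ∈ I → B ∈ I → A ∪ B ∈ I) ∧
  (∀ A : Set X, A.Finite → A ∈ I) ∧
  (Set.univ : Set X) ∉ I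

/-- The restriction `I|A = {B ∩ A : B ∈ I}`. -/
def restr {X : Type*} (I : Set (Set X)) (A : Set X) : Set (Set X) :=
  {C | ∃ B ∈ I, C = B ∩ A}

/-- `I|A ≅ I|B`: there is a bijection `f : B → A` such that for every
`C ⊆ A`, `C ∈ I|A ↔ f⁻¹[C] ∈ I|B`. -/
def RIso {X : Type*} (I : Set (Set X)) (A B : Set X) : Prop :=
  ∃ f : X → X, Set.BijOn f B A ∧
    ∀ C : Set X, C ⊆ A → (C ∈ restr I A ↔ B ∩ f ⁻¹' C ∈ restr I B)

/-- The homogeneity family `H(I) = {A : I|A ≅ I}`. -/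
def HF {X : Type*} (I : Set (Set X)) : Set (Set X) := {A | RIso I A Set.univ}

/-- `I` is homogeneous if `H(I) = I⁺`. -/
def HomogIdeal {X : Type*} (I : Set (Set X)) : Prop := HF I = {A | A ∉ I}

/-- `I` is anti-homogeneous if `H(I) = I*`. -/
def AntiHomogIdeal {X : Type*} (I : Set (Set X)) : Prop := HF I = {A | Aᶜ ∈ I}

/-- `I ≅ J`: a bijection `f` of underlying sets with `A ∈ I ↔ f⁻¹[A] ∈ J`. -/
def Isomorphic {X Y : Type*} (I : Set (Set X)) (J : Set (Set Y)) : Prop :=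
  ∃ f : Y → X, Function.Bijective f ∧ ∀ A : Set X, A ∈ I ↔ f ⁻¹' A ∈ J

/-- The ideal `Fin ⊕ P(ω)` on `{0,1} × ω` (here `Bool × ℕ`, `true` playing the
role of `1`): all sets `A` with `{n : (1,n) ∈ A}` finite. -/
def FinOplusAll : Set (Set (Bool × ℕ)) := {A | {n : ℕ | (true, n) ∈ A}.Finite}

/-- An ideal on `ω` is admissible if it is not isomorphic to `Fin ⊕ P(ω)`. -/
def Admissible (I : Set (Set ℕ)) : Prop := ¬ Isomorphic I FinOplusAll

/-- An injection `f` is bi-`I`-invariant if `f[A] ∈ I ↔ A ∈ I` for all `A`. -/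
def BiInvariant {X : Type*} (I : Set (Set X)) (f : X → X) : Prop :=
  Function.Injective f ∧ ∀ A : Set X, f '' A ∈ I ↔ A ∈ I

/-- The set of fixed points of `f`. -/
def fixedSet {X : Type*} (f : X → X) : Set X := {x | f x = x}

/-- `I` is a maximal ideal. -/
def MaximalIdeal {X : Type*} (I : Set (Set X)) : Prop :=
  IsIdeal I ∧ ∀ A : Set X, A ∈ I ∨ Aᶜ ∈ I

/-- `(x_n)` is `I`-convergent to `l`. -/
def IConv (I : Set (Set ℕ)) (x : ℕ → ℝ) (l : ℝ) : Prop :=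
  ∀ ε : ℝ, 0 < ε → {n : ℕ | ε ≤ |x n - l|} ∈ I

/-- Condition (C3): every `I`-convergent sequence admits a bi-`I`-invariant
injection along which it converges classically. -/
def CondC3 (I : Set (Set ℕ)) : Prop :=
  ∀ (x : ℕ → ℝ) (l : ℝ), IConv I x l →
    ∃ f : ℕ → ℕ, BiInvariant I f ∧
      Filter.Tendsto (fun n => x (f n)) Filter.atTop (nhds l)


lemma restr_univ {X : Type*} (I : Set (Set X)) : restr I Set.univ = I := by
  ext C
  constructor
  · rintro ⟨B, hB, rfl⟩; simpa using hB
  · intro h; exact ⟨C, h, by simp⟩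

lemma mem_restr_iff {X : Type*} {I : Set (Set X)} (hI : IsIdeal I)
    {B C : Set X} (hCB : C ⊆ B) : C ∈ restr I B ↔ C ∈ I := by
  constructor
  · rintro ⟨D, hD, rfl⟩; exact hI.1 D _ hD Set.inter_subset_left
  · intro h; exact ⟨C, h, (Set.inter_eq_left.mpr hCB).symm⟩

/-- Cumulative unions. -/
def cum (A : ℕ → Set ℕ) : ℕ → Set ℕ
  | 0 => A 0
  | n+1 => cum A n ∪ A (n+1)

/-- an admissible ideal satisfies (C3) iff every countable
family in `I` admits `A ∈ H(I)` almost disjoint from all its members. -/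
theorem stmt_16 (I : Set (Set ℕ)) (hI : IsIdeal I) (hadm : Admissible I) :
    CondC3 I ↔
      ∀ A : ℕ → Set ℕ, (∀ n, A n ∈ I) →
        ∃ B : Set ℕ, B ∈ HF I ∧ ∀ n, (B ∩ A n).Finite := by
  classical
  constructor
  · -- forward direction
    intro hC3 A hA
    set Bn : ℕ → Set ℕ := cum A with hBndef
    have hBnI : ∀ n, Bn n ∈ I := by
      intro n
      induction n with
      | zero => exact hA 0
      | succ n ih => exact hI.2.1 _ _ ih (hA (n+1))
    have hmono : Monotone Bn := monotone_nat_of_le_succ (fun n => by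
      show Bn n ⊆ Bn n ∪ A (n+1)
      exact Set.subset_union_left)
    have hsub : ∀ n, A n ⊆ Bn n := by
      intro n
      cases n with
      | zero => exact subset_rfl
      | succ n => exact Set.subset_union_right
    set x : ℕ → ℝ := fun k => if h : ∃ n, k ∈ Bn n then ((Nat.find h : ℝ) + 1)⁻¹ else 0
      with hxdef
    have hx_nonneg : ∀ k, 0 ≤ x k := by
      intro k
      rw [hxdef]
      dsimp only
      split <;> positivity
    have hxlb : ∀ n k, k ∈ Bn n → ((n : ℝ) + 1)⁻¹ ≤ x k := by
      intro n k hk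
      have h : ∃ m, k ∈ Bn m := ⟨n, hk⟩
      have hxk : x k = ((Nat.find h : ℝ) + 1)⁻¹ := dif_pos h
      rw [hxk]
      have hle : Nat.find h ≤ n := Nat.find_le hk
      have : ((Nat.find h : ℝ) + 1) ≤ (n : ℝ) + 1 := by
        have : (Nat.find h : ℝ) ≤ (n : ℝ) := Nat.cast_le.mpr hle
        linarith
      exact inv_anti₀ (by positivity) this
    have hconv : IConv I x 0 := by
      intro ε hε
      set N := ⌈ε⁻¹⌉₊ with hN
      refine hI.1 (Bn N) _ (hBnI N) ?_
      intro k hk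
      simp only [Set.mem_setOf_eq, sub_zero] at hk
      rw [abs_of_nonneg (hx_nonneg k)] at hk
      have hx0 : x k ≠ 0 := ne_of_gt (lt_of_lt_of_le hε hk)
      have h : ∃ n, k ∈ Bn n := by
        by_contra hcon
        apply hx0
        exact dif_neg hcon
      have hxk : x k = ((Nat.find h : ℝ) + 1)⁻¹ := dif_pos h
      rw [hxk] at hk
      have hpos : (0 : ℝ) < (Nat.find h : ℝ) + 1 := by positivity
      have h1 : (Nat.find h : ℝ) + 1 ≤ ε⁻¹ := by
        rw [← inv_inv ((Nat.find h : ℝ) + 1)]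
        exact inv_anti₀ hε hk
      have h2 : (Nat.find h : ℝ) < (N : ℝ) := by
        have := Nat.le_ceil ε⁻¹
        calc (Nat.find h : ℝ) < (Nat.find h : ℝ) + 1 := by linarith
        _ ≤ ε⁻¹ := h1
        _ ≤ (N : ℝ) := by rw [hN]; exact_mod_cast Nat.le_ceil ε⁻¹
      have hfind : Nat.find h ≤ N := le_of_lt (by exact_mod_cast h2)
      exact hmono hfind (Nat.find_spec h)
    obtain ⟨f, ⟨hfinj, hfinv⟩, htend⟩ := hC3 x 0 hconv
    refine ⟨Set.range f, ?_, ?_⟩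
    · refine ⟨f, ⟨fun k _ => ⟨k, rfl⟩, hfinj.injOn, ?_⟩, ?_⟩
      · intro m hm
        obtain ⟨k, rfl⟩ := hm
        exact ⟨k, Set.mem_univ k, rfl⟩
      · intro C hC
        rw [mem_restr_iff hI hC, restr_univ, Set.univ_inter]
        have h1 := hfinv (f ⁻¹' C)
        rw [Set.image_preimage_eq_of_subset hC] at h1
        exact h1
    · intro n
      have hev : ∀ᶠ k in atTop, dist (x (f k)) 0 < ((n : ℝ) + 1)⁻¹ :=
        Metric.tendsto_nhds.mp htend _ (by positivity)
      rw [← Nat.cofinite_eq_atTop, Filter.eventually_cofinite] at hev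
      apply Set.Finite.subset (hev.image f)
      rintro m ⟨⟨k, rfl⟩, hmA⟩
      refine ⟨k, ?_, rfl⟩
      simp only [Set.mem_setOf_eq, not_lt, Real.dist_eq, sub_zero,
        abs_of_nonneg (hx_nonneg (f k))]
      exact hxlb n (f k) (hsub n hmA)
  · -- backward direction
    intro h x l hconv
    set A : ℕ → Set ℕ := fun n => {k | ((n : ℝ) + 1)⁻¹ ≤ |x k - l|} with hAdef
    have hAI : ∀ n, A n ∈ I := fun n => hconv _ (by positivity)
    obtain ⟨B, hB, hfin⟩ := h A hAI
    obtain ⟨g, hg, hcond⟩ := hB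
    have hginj : Function.Injective g := fun a b hab =>
      hg.injOn (Set.mem_univ a) (Set.mem_univ b) hab
    have hrange : Set.range g = B := by rw [← Set.image_univ]; exact hg.image_eq
    have key : ∀ C : Set ℕ, C ⊆ B → (C ∈ I ↔ g ⁻¹' C ∈ I) := by
      intro C hC
      have h1 := hcond C hC
      rwa [mem_restr_iff hI hC, restr_univ, Set.univ_inter] at h1
    refine ⟨g, ⟨hginj, ?_⟩, ?_⟩
    · intro S
      have h1 := key (g '' S) (by rw [← hrange]; exact Set.image_subset_range g S)
      rwa [Set.preimage_image_eq S hginj] at h1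
    · rw [Metric.tendsto_nhds]
      intro ε hε
      obtain ⟨n, hn⟩ := exists_nat_one_div_lt hε
      rw [← Nat.cofinite_eq_atTop, Filter.eventually_cofinite]
      apply Set.Finite.subset (((hfin n).preimage (hginj.injOn)))
      intro k hk
      simp only [Set.mem_setOf_eq, not_lt, Real.dist_eq] at hk
      refine ⟨hrange ▸ Set.mem_range_self k, ?_⟩
      show ((n : ℝ) + 1)⁻¹ ≤ |x (g k) - l|
      calc ((n : ℝ) + 1)⁻¹ = 1 / ((n : ℝ) + 1) := (one_div _).symm
      _ ≤ ε := le_of_lt hn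
      _ ≤ |x (g k) - l| := hk
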